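/- For n ≥ 1 and α ≥ 1, there is a graded ring isomorphism L_n^{2α,α}/(linear forms) ≅ k[x_1,...,x_{n+1}]/(x_1^α x_2^α, ..., x_n^α x_{n+1}^α), where the linear forms v_{ik} - v_{il} and v'_{ik} - v'_{il} form a regular sequence of length (n+1)(α-1) on L_n^{2α,α}. -/

import Mathlib

set_option synthInstance.maxHeartbeats 1000000
set_option maxHeartbeats 1000000
open MvPolynomial

section Helpers

lemma key_lemma {k : Type} [CommRing k] {σ : Type} [DecidableEq σ] (a b : σ) (hab : a ≠ b)
    (G : Set (σ →₀ ℕ)) (hG : ∀ u ∈ G, u a ≤ 1 ∧ (u a = 0 ↔ u b = 0))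
    {f : MvPolynomial σ k}
    (hf : (X a - X b) * f ∈ Ideal.span ((fun s => monomial s (1 : k)) '' G)) :
    f ∈ Ideal.span ((fun s => monomial s (1 : k)) '' G) := by
  rw [mem_ideal_span_monomial_image] at hf ⊢
  have hcoeff : ∀ w : σ →₀ ℕ, coeff w ((X a - X b) * f)
      = (if a ∈ w.support then coeff (w - Finsupp.single a 1) f else 0)
      - (if b ∈ w.support then coeff (w - Finsupp.single b 1) f else 0) := by
    intro w
    rw [sub_mul, coeff_sub, coeff_X_mul', coeff_X_mul']
  -- case m a = 0 handled directly
  have case0 : ∀ m : σ →₀ ℕ, m a = 0 → coeff m f ≠ 0 → ∃ u ∈ G, u ≤ m := by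
    intro m hma hm
    set w : σ →₀ ℕ := m + Finsupp.single b 1 with hw
    have hwa : w a = 0 := by
      simp [hw, Finsupp.single_apply, (hab.symm : b ≠ a), hma]
    have hwb : w b = m b + 1 := by simp [hw]
    have hsub : w - Finsupp.single b 1 = m := by
      simp [hw]
    have hcw : coeff w ((X a - X b) * f) = - coeff m f := by
      rw [hcoeff w]
      rw [if_neg (by simp [Finsupp.mem_support_iff, hwa]),
        if_pos (by simp [Finsupp.mem_support_iff, hwb]), hsub]
      ring
    have hwsupp : w ∈ ((X a - X b) * f).support := by
      rw [mem_support_iff, hcw]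
      exact neg_ne_zero.mpr hm
    obtain ⟨u, huG, hu⟩ := hf w hwsupp
    have hua : u a = 0 := Nat.le_antisymm (le_of_le_of_eq (hu a) hwa) (Nat.zero_le _)
    have hub : u b = 0 := (hG u huG).2.mp hua
    refine ⟨u, huG, fun s => ?_⟩
    by_cases hs : s = a
    · simp [hs, hua]
    by_cases hsb : s = b
    · simp [hsb, hub]
    · have := hu s
      simpa [hw, Finsupp.single_apply, Ne.symm hsb] using this
  -- main induction on b-degree, for m a ≥ 1
  have main : ∀ N : ℕ, ∀ m : σ →₀ ℕ, m b ≤ N → m a ≠ 0 → coeff m f ≠ 0 → ∃ u ∈ G, u ≤ m := by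
    intro N
    induction N with
    | zero =>
      intro m hmb hma hm
      set w : σ →₀ ℕ := m + Finsupp.single a 1 with hw
      have hwa : w a = m a + 1 := by simp [hw]
      have hwb : w b = 0 := by
        have : m b = 0 := Nat.le_antisymm hmb (Nat.zero_le _)
        simp [hw, Finsupp.single_apply, hab, this]
      have hsub : w - Finsupp.single a 1 = m := by simp [hw]
      have hcw : coeff w ((X a - X b) * f) = coeff m f := by
        rw [hcoeff w, if_pos (by simp [Finsupp.mem_support_iff, hwa]),
          if_neg (by simp [Finsupp.mem_support_iff, hwb]), hsub]
        ring
      obtain ⟨u, huG, hu⟩ := hf w (by rw [mem_support_iff, hcw]; exact hm)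
      refine ⟨u, huG, fun s => ?_⟩
      by_cases hs : s = a
      · subst hs
        exact le_trans (hG u huG).1 (Nat.one_le_iff_ne_zero.mpr hma)
      · have := hu s
        simpa [hw, Finsupp.single_apply, Ne.symm hs] using this
    | succ N ih =>
      intro m hmb hma hm
      set w : σ →₀ ℕ := m + Finsupp.single a 1 with hw
      have hwa : w a = m a + 1 := by simp [hw]
      have hwb : w b = m b := by simp [hw, Finsupp.single_apply, hab]
      have hsub : w - Finsupp.single a 1 = m := by simp [hw]
      by_cases hc : coeff w ((X a - X b) * f) ≠ 0
      · obtain ⟨u, huG, hu⟩ := hf w (mem_support_iff.mpr hc)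
        refine ⟨u, huG, fun s => ?_⟩
        by_cases hs : s = a
        · subst hs
          exact le_trans (hG u huG).1 (Nat.one_le_iff_ne_zero.mpr hma)
        · have := hu s
          simpa [hw, Finsupp.single_apply, Ne.symm hs] using this
      · push_neg at hc
        rw [hcoeff w, if_pos (by simp [Finsupp.mem_support_iff, hwa]), hsub,
          sub_eq_zero] at hc
        -- coeff m f = if b ∈ w.support then coeff (w - single b 1) f else 0
        have hbm : m b ≠ 0 := by
          intro h0
          rw [if_neg (by simp [Finsupp.mem_support_iff, hwb, h0])] at hc
          exact hm hc
        rw [if_pos (by simp [Finsupp.mem_support_iff, hwb, hbm])] at hc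
        set m' : σ →₀ ℕ := w - Finsupp.single b 1 with hm'
        have hm'app : ∀ s, m' s = w s - Finsupp.single b 1 s := fun s =>
          Finsupp.tsub_apply _ _ _
        have hm'b : m' b = m b - 1 := by rw [hm'app, hwb]; simp
        have hm'a : m' a ≠ 0 := by
          rw [hm'app, hwa]
          simp only [Finsupp.single_apply, if_neg (hab.symm : ¬ b = a)]
          omega
        obtain ⟨u, huG, hu⟩ := ih m' (by omega) hm'a (by rw [← hc]; exact hm)
        refine ⟨u, huG, fun s => ?_⟩
        by_cases hs : s = a
        · subst hs
          exact le_trans (hG u huG).1 (Nat.one_le_iff_ne_zero.mpr hma)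
        by_cases hsb : s = b
        · rw [hsb]
          have h1 := hu b
          rw [hm'b] at h1
          omega
        · have := hu s
          rw [hm'app s] at this
          simpa [hw, Finsupp.single_apply, Ne.symm hs, Ne.symm hsb] using this
  intro m hm
  rw [mem_support_iff] at hm
  by_cases hma : m a = 0
  · exact case0 m hma hm
  · exact main (m b) m le_rfl hma hm
lemma prod_X_eq_monomial {k σ ι : Type} [CommSemiring k] [DecidableEq ι] (s : Finset ι)
    (g : ι → σ) :
    (∏ j ∈ s, (X (g j) : MvPolynomial σ k)) = monomial (∑ j ∈ s, Finsupp.single (g j) 1) 1 := by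
  induction s using Finset.induction_on with
  | empty => simp
  | insert a s h ih =>
    rw [Finset.prod_insert h, Finset.sum_insert h, ih, X, monomial_mul, one_mul]
lemma rename_sub_mem {k σ : Type} [CommRing k] (v : σ → σ) (J : Ideal (MvPolynomial σ k))
    (hv : ∀ p, X (v p) - X p ∈ J) (g : MvPolynomial σ k) :
    rename v g - g ∈ J := by
  have h : (Ideal.Quotient.mkₐ k J).comp (rename v) = Ideal.Quotient.mkₐ k J := by
    apply MvPolynomial.algHom_ext
    intro p
    simp only [AlgHom.comp_apply, rename_X, Ideal.Quotient.mkₐ_eq_mk]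
    rw [Ideal.Quotient.eq]
    exact hv p
  have h2 := DFunLike.congr_fun h g
  simp only [AlgHom.comp_apply, Ideal.Quotient.mkₐ_eq_mk] at h2
  exact Ideal.Quotient.eq.mp h2
lemma smulreg_helper {A : Type} [CommRing A] (I J : Ideal A) (x : A)
    (h : ∀ f, x * f ∈ I ⊔ J → f ∈ I ⊔ J) :
    IsSMulRegular ((A ⧸ I) ⧸ ((J.map (Ideal.Quotient.mk I)) • ⊤ : Submodule (A ⧸ I) (A ⧸ I)))
      (Ideal.Quotient.mk I x) := by
  have hKtop : ((J.map (Ideal.Quotient.mk I)) • ⊤ : Submodule (A ⧸ I) (A ⧸ I))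
      = J.map (Ideal.Quotient.mk I) := by
    rw [smul_eq_mul, Ideal.mul_top]
  intro y z hyz
  obtain ⟨y', rfl⟩ := Submodule.Quotient.mk_surjective _ y
  obtain ⟨z', rfl⟩ := Submodule.Quotient.mk_surjective _ z
  obtain ⟨g, rfl⟩ := Ideal.Quotient.mk_surjective y'
  obtain ⟨g', rfl⟩ := Ideal.Quotient.mk_surjective z'
  simp only at hyz
  rw [← Submodule.Quotient.mk_smul, ← Submodule.Quotient.mk_smul,
    Submodule.Quotient.eq, hKtop] at hyz
  have hx : (Ideal.Quotient.mk I x) • (Ideal.Quotient.mk I g)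
      - (Ideal.Quotient.mk I x) • (Ideal.Quotient.mk I g')
      = Ideal.Quotient.mk I (x * (g - g')) := by
    rw [smul_eq_mul, smul_eq_mul, ← map_mul, ← map_mul, ← map_sub, mul_sub]
  rw [hx] at hyz
  obtain ⟨j, hjJ, hj⟩ := (Ideal.mem_map_iff_of_surjective _
    Ideal.Quotient.mk_surjective).mp hyz
  have hij : j - x * (g - g') ∈ I := Ideal.Quotient.eq.mp hj
  have hmem : x * (g - g') ∈ I ⊔ J := by
    have : x * (g - g') = j - (j - x * (g - g')) := by ring
    rw [this]
    exact sub_mem (Ideal.mem_sup_right hjJ) (Ideal.mem_sup_left hij)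
  obtain ⟨i0, hi0, j0, hj0, heq⟩ := Submodule.mem_sup.mp (h _ hmem)
  rw [Submodule.Quotient.eq, hKtop]
  have : Ideal.Quotient.mk I g - Ideal.Quotient.mk I g' = Ideal.Quotient.mk I j0 := by
    rw [← map_sub, ← heq, map_add, Ideal.Quotient.eq_zero_iff_mem.mpr hi0, zero_add]
  rw [this]
  exact Ideal.mem_map_of_mem _ hj0
end Helpers

/-- The edge ideal of the hyperline `L_n^{2α,α}`: the vertices come in `n+1` blocks of size
`α` (block `i` consisting of the variables `v_{i1},…,v_{iα}`), and the `i`-th edge is the set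
of all `2α` vertices in blocks `i` and `i+1`, contributing the product of its variables. -/
noncomputable def hyperlineIdeal (k : Type) [Field k] (n α : ℕ) :
    Ideal (MvPolynomial (Fin (n + 1) × Fin α) k) :=
  Ideal.span (Set.range fun i : Fin n =>
    (∏ j : Fin α, X (i.castSucc, j)) * ∏ j : Fin α, X (i.succ, j))

/-- The differences `v_{ik} - v_{i1}` of variables within a block. -/
def blockDifferences (k : Type) [Field k] (n α : ℕ) (hα : 1 ≤ α) :
    Set (MvPolynomial (Fin (n + 1) × Fin α) k) :=
  {x | ∃ (i : Fin (n + 1)) (j : Fin α), j ≠ ⟨0, hα⟩ ∧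
    x = X (i, j) - X (i, (⟨0, hα⟩ : Fin α))}

section Steps

variable {k : Type} [Field k] {n α : ℕ}

lemma colon_step {k : Type} [Field k] {n α : ℕ} (hα : 1 ≤ α)
    (Q : Finset (Fin (n + 1) × Fin α)) (hQ : ∀ p ∈ Q, p.2 ≠ ⟨0, hα⟩)
    (a : Fin (n + 1) × Fin α) (ha2 : a.2 ≠ ⟨0, hα⟩) (haQ : a ∉ Q)
    {f : MvPolynomial (Fin (n + 1) × Fin α) k}
    (hf : (X a - X (a.1, ⟨0, hα⟩)) * f ∈ hyperlineIdeal k n α ⊔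
      Ideal.span ((fun p => X p - X (p.1, (⟨0, hα⟩ : Fin α))) '' ↑Q)) :
    f ∈ hyperlineIdeal k n α ⊔
      Ideal.span ((fun p => X p - X (p.1, (⟨0, hα⟩ : Fin α))) '' ↑Q) := by
  classical
  set b0 : Fin α := ⟨0, hα⟩ with hb0
  set D : (Fin (n + 1) × Fin α) → MvPolynomial (Fin (n + 1) × Fin α) k :=
    fun p => X p - X (p.1, b0) with hD
  set v : (Fin (n + 1) × Fin α) → (Fin (n + 1) × Fin α) :=
    fun p => if p ∈ Q then (p.1, b0) else p with hv
  set S : MvPolynomial (Fin (n + 1) × Fin α) k →ₐ[k] MvPolynomial (Fin (n + 1) × Fin α) k :=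
    rename v with hS
  set J : Ideal (MvPolynomial (Fin (n + 1) × Fin α) k) := Ideal.span (D '' ↑Q) with hJ
  set I : Ideal (MvPolynomial (Fin (n + 1) × Fin α) k) := hyperlineIdeal k n α with hI
  set gen : Fin n → MvPolynomial (Fin (n + 1) × Fin α) k :=
    fun i => (∏ j : Fin α, X (i.castSucc, j)) * ∏ j : Fin α, X (i.succ, j) with hgen
  have hIdef : I = Ideal.span (Set.range gen) := rfl
  have hv1 : ∀ p, (v p).1 = p.1 := by
    intro p; by_cases h : p ∈ Q <;> simp [hv, h]
  have hvQ : ∀ p ∈ Q, v p = (p.1, b0) := by intro p hp; simp [hv, hp]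
  have hvb : ∀ i : Fin (n + 1), v (i, b0) = (i, b0) := by
    intro i
    have : (i, b0) ∉ Q := fun h => hQ _ h rfl
    simp [hv, this]
  have hva : v a = a := by simp [hv, haQ]
  have hab : a ≠ (a.1, b0) := fun h => ha2 (congrArg Prod.snd h)
  -- S g - g ∈ J
  have hsub : ∀ g, S g - g ∈ J := by
    apply rename_sub_mem
    intro p
    by_cases h : p ∈ Q
    · rw [hvQ p h]
      have h1 : D p ∈ J := Ideal.subset_span ⟨p, h, rfl⟩
      have h2 := J.neg_mem h1
      rw [hD] at h2
      simpa using h2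
    · simp [hv, h]
  -- exponent vectors
  set E : Fin (n + 1) → (Fin (n + 1) × Fin α →₀ ℕ) :=
    fun i => ∑ j : Fin α, Finsupp.single (v (i, j)) 1 with hE
  set u : Fin n → (Fin (n + 1) × Fin α →₀ ℕ) := fun i => E i.castSucc + E i.succ with hu
  have hSprod : ∀ i : Fin (n + 1), S (∏ j : Fin α, X (i, j)) = monomial (E i) 1 := by
    intro i
    rw [hS, map_prod]
    simp only [rename_X]
    exact prod_X_eq_monomial _ _
  have hSgen : ∀ i, S (gen i) = monomial (u i) 1 := by
    intro i
    rw [hgen]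
    simp only []
    rw [map_mul, hSprod, hSprod, monomial_mul, one_mul]
  -- evaluation of E at a and at (a.1, b0)
  have hEa : ∀ blk : Fin (n + 1), E blk a = if blk = a.1 then 1 else 0 := by
    intro blk
    rw [hE]
    simp only []
    rw [Finsupp.finset_sum_apply]
    have hterm : ∀ j : Fin α,
        (Finsupp.single (v (blk, j)) 1 : Fin (n + 1) × Fin α →₀ ℕ) a
          = if blk = a.1 ∧ j = a.2 then 1 else 0 := by
      intro j
      rw [Finsupp.single_apply]
      have : (v (blk, j) = a) ↔ (blk = a.1 ∧ j = a.2) := by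
        constructor
        · intro h
          by_cases hq : (blk, j) ∈ Q
          · rw [hvQ _ hq] at h
            exact absurd (congrArg Prod.snd h).symm ha2
          · rw [hv] at h
            simp only [if_neg hq] at h
            exact ⟨(congrArg Prod.fst h), (congrArg Prod.snd h)⟩
        · rintro ⟨h1, h2⟩
          have hpa : (blk, j) = a := Prod.ext h1 h2
          rw [hpa, hva]
      simp only [this]
    simp only [hterm]
    by_cases h1 : blk = a.1
    · simp only [h1, true_and, if_pos]
      rw [Finset.sum_ite_eq' Finset.univ a.2 (fun _ => 1)]
      simp
    · simp [h1]
  have hEb0 : ∀ blk : Fin (n + 1), blk ≠ a.1 → E blk (a.1, b0) = 0 := by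
    intro blk hblk
    rw [hE]
    simp only []
    rw [Finsupp.finset_sum_apply]
    apply Finset.sum_eq_zero
    intro j _
    rw [Finsupp.single_apply, if_neg]
    intro h
    apply hblk
    have h' := congrArg Prod.fst h
    rw [hv1] at h'
    exact h'
  have hEb1 : E a.1 (a.1, b0) ≠ 0 := by
    rw [hE]
    simp only []
    rw [Finsupp.finset_sum_apply]
    intro h0
    have := (Finset.sum_eq_zero_iff).mp h0 b0 (Finset.mem_univ _)
    rw [hvb, Finsupp.single_apply, if_pos rfl] at this
    exact one_ne_zero this
  -- conditions for key lemma
  have hcond : ∀ w ∈ Set.range u, w a ≤ 1 ∧ (w a = 0 ↔ w (a.1, b0) = 0) := by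
    rintro w ⟨i, rfl⟩
    have hne : i.castSucc ≠ i.succ := (Fin.castSucc_lt_succ (i := i)).ne
    rw [hu]
    simp only [Finsupp.add_apply]
    rw [hEa, hEa]
    constructor
    · by_cases h1 : i.castSucc = a.1
      · have h2 : ¬ i.succ = a.1 := fun h => hne (h1.trans h.symm)
        rw [if_pos h1, if_neg h2]
      · rw [if_neg h1]
        by_cases h2 : i.succ = a.1
        · rw [if_pos h2]
        · rw [if_neg h2]
          omega
    · by_cases h1 : i.castSucc = a.1
      · have h2 : ¬ i.succ = a.1 := fun h => hne (h1.trans h.symm)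
        have hb : E i.castSucc (a.1, b0) ≠ 0 := by rw [h1]; exact hEb1
        refine iff_of_false ?_ fun hx => hb (by omega)
        rw [if_pos h1, if_neg h2]
        omega
      · by_cases h2 : i.succ = a.1
        · have hb : E i.succ (a.1, b0) ≠ 0 := by rw [h2]; exact hEb1
          refine iff_of_false ?_ fun hx => hb (by omega)
          rw [if_neg h1, if_pos h2]
          omega
        · refine iff_of_true ?_ ?_
          · rw [if_neg h1, if_neg h2]
          · rw [hEb0 _ h1, hEb0 _ h2]
  -- image of the hyperline ideal is our monomial ideal
  have himg : ⇑S '' Set.range gen = (fun s => monomial s (1 : k)) '' Set.range u := by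
    rw [← Set.range_comp, ← Set.range_comp]
    exact congrArg Set.range (funext hSgen)
  have hmapI : Ideal.map S I = Ideal.span ((fun s => monomial s (1 : k)) '' Set.range u) := by
    rw [hIdef, Ideal.map_span, himg]
  -- push hf through S
  have hle1 : I ⊔ J ≤ Ideal.comap S (Ideal.map S I) := by
    apply sup_le
    · exact Ideal.le_comap_map
    · rw [hJ, Ideal.span_le]
      rintro x ⟨p, hp, rfl⟩
      rw [SetLike.mem_coe, Ideal.mem_comap]
      have hz : S (X p - X (p.1, b0)) = 0 := by
        rw [map_sub, hS]
        simp only [rename_X]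
        rw [hvQ p (Finset.mem_coe.mp hp), hvb]
        exact sub_self _
      rw [hz]
      exact (Ideal.map S I).zero_mem
  have hSf : (X a - X (a.1, b0)) * S f ∈ Ideal.map S I := by
    have h1 := hle1 hf
    rw [Ideal.mem_comap, map_mul, map_sub, hS] at h1
    simp only [rename_X] at h1
    rw [hva, hvb] at h1
    exact h1
  rw [hmapI] at hSf
  have hkey := key_lemma a (a.1, b0) hab (Set.range u) hcond hSf
  have hmaple : Ideal.map S I ≤ I ⊔ J := by
    rw [hIdef, Ideal.map_span, Ideal.span_le]
    rintro x ⟨y, ⟨i, rfl⟩, rfl⟩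
    have h1 : gen i ∈ I := by rw [hIdef]; exact Ideal.subset_span ⟨i, rfl⟩
    have h2 := hsub (gen i)
    have h3 := add_mem (Ideal.mem_sup_left h1) (Ideal.mem_sup_right h2)
    simpa [hIdef] using h3
  have hSfI : S f ∈ I ⊔ J := hmaple (by rw [hmapI]; exact hkey)
  have hfin := add_mem hSfI (Ideal.mem_sup_right (J.neg_mem (hsub f)))
  simpa using hfin
lemma hyperline_sup_ne_top (hα : 1 ≤ α)
    (K : Ideal (MvPolynomial (Fin (n + 1) × Fin α) k))
    (hK : K ≤ Ideal.span (blockDifferences k n α hα)) :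
    hyperlineIdeal k n α ⊔ K ≠ ⊤ := by
  intro htop
  set ev : MvPolynomial (Fin (n + 1) × Fin α) k →ₐ[k] k := aeval (fun _ => (0 : k)) with hev
  have hle : hyperlineIdeal k n α ⊔ K ≤ RingHom.ker ev.toRingHom := by
    apply sup_le
    · rw [hyperlineIdeal, Ideal.span_le]
      rintro y ⟨i, rfl⟩
      rw [SetLike.mem_coe, RingHom.mem_ker]
      show ev _ = 0
      rw [map_mul]
      have h0 : ev (∏ j : Fin α, X (i.castSucc, j)) = 0 := by
        rw [map_prod]
        apply Finset.prod_eq_zero (Finset.mem_univ (⟨0, hα⟩ : Fin α))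
        simp [hev]
      rw [h0, zero_mul]
    · refine le_trans hK ?_
      rw [Ideal.span_le]
      rintro y ⟨i, j, hj, rfl⟩
      rw [SetLike.mem_coe, RingHom.mem_ker]
      show ev _ = 0
      rw [map_sub]
      simp [hev]
  have h1 : (1 : MvPolynomial (Fin (n + 1) × Fin α) k) ∈ RingHom.ker ev.toRingHom :=
    hle (htop ▸ Submodule.mem_top)
  rw [RingHom.mem_ker] at h1
  simp at h1

end Steps

/-- The linear forms `v_{ik} - v_{il}` form a regular sequence of length `(n+1)(α-1)` on the
hyperline algebra `L_n^{2α,α}`, and factoring them out yields a (graded) `k`-algebra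
isomorphism `L_n^{2α,α}/(linear forms) ≅ k[x_1,…,x_{n+1}]/(x_1^α x_2^α, …, x_n^α x_{n+1}^α)`. -/
theorem hyperline_regular_and_iso (k : Type) [Field k] (n α : ℕ) (hn : 1 ≤ n) (hα : 1 ≤ α) :
    (∃ l : List (MvPolynomial (Fin (n + 1) × Fin α) k),
      l.length = (n + 1) * (α - 1) ∧ l.Nodup ∧
      (∀ x, x ∈ l ↔ x ∈ blockDifferences k n α hα) ∧
      RingTheory.Sequence.IsRegular
        (MvPolynomial (Fin (n + 1) × Fin α) k ⧸ hyperlineIdeal k n α)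
        (l.map (Ideal.Quotient.mk (hyperlineIdeal k n α)))) ∧
    Nonempty
      ((MvPolynomial (Fin (n + 1) × Fin α) k ⧸
          (hyperlineIdeal k n α ⊔ Ideal.span (blockDifferences k n α hα))) ≃ₐ[k]
        MvPolynomial (Fin (n + 1)) k ⧸
          Ideal.span (Set.range fun i : Fin n =>
            (X i.castSucc ^ α * X i.succ ^ α : MvPolynomial (Fin (n + 1)) k))) := by
  classical
  set c : Fin α := ⟨0, hα⟩ with hc
  set D : (Fin (n + 1) × Fin α) → MvPolynomial (Fin (n + 1) × Fin α) k :=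
    fun p => X p - X (p.1, c) with hD
  set I : Ideal (MvPolynomial (Fin (n + 1) × Fin α) k) := hyperlineIdeal k n α with hI
  constructor
  · -- regular sequence part
    set L : List (Fin (n + 1) × Fin α) :=
      (Finset.univ.filter fun p : Fin (n + 1) × Fin α => p.2 ≠ c).toList with hL
    have hLnd : L.Nodup := Finset.nodup_toList _
    have hLmem : ∀ p, p ∈ L ↔ p.2 ≠ c := by
      intro p
      rw [hL, Finset.mem_toList, Finset.mem_filter]
      simp
    set l : List (MvPolynomial (Fin (n + 1) × Fin α) k) := L.map D with hl
    refine ⟨l, ?_, ?_, ?_, ?_⟩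
    · -- length
      rw [hl, List.length_map, hL, Finset.length_toList]
      have h1 : (Finset.univ.filter fun p : Fin (n + 1) × Fin α => p.2 = c)
          = Finset.univ.map (Function.Embedding.sectL (Fin (n + 1)) c) := by
        ext p
        simp only [Finset.mem_filter, Finset.mem_univ, true_and, Finset.mem_map,
          Function.Embedding.sectL_apply]
        constructor
        · intro hp
          exact ⟨p.1, by rw [← hp]⟩
        · rintro ⟨i, rfl⟩
          rfl
      have h2 : (Finset.univ.filter fun p : Fin (n + 1) × Fin α => p.2 = c).card = n + 1 := by
        rw [h1, Finset.card_map, Finset.card_univ, Fintype.card_fin]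
      have h4 : (Finset.univ : Finset (Fin (n + 1) × Fin α)).card = (n + 1) * α := by
        simp [Finset.card_univ]
      have h5 : (Finset.univ.filter fun p : Fin (n + 1) × Fin α => p.2 ≠ c)
          = Finset.univ \ (Finset.univ.filter fun p : Fin (n + 1) × Fin α => p.2 = c) := by
        ext p
        simp
      rw [h5, Finset.card_sdiff_of_subset (Finset.filter_subset _ _), h2, h4,
        Nat.mul_sub, Nat.mul_one]
    · -- nodup
      refine List.Nodup.map_on ?_ hLnd
      intro p hp q hq hpq
      by_contra hne
      have h2 := congrArg (coeff (Finsupp.single p 1)) hpq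
      rw [hD] at h2
      simp only [coeff_sub, coeff_X'] at h2
      rw [if_pos trivial,
        if_neg (fun hh => ((hLmem p).mp hp)
          (congrArg Prod.snd ((Finsupp.single_left_inj one_ne_zero).mp hh)).symm),
        if_neg (fun hh => hne ((Finsupp.single_left_inj one_ne_zero).mp hh).symm),
        if_neg (fun hh => ((hLmem p).mp hp)
          (congrArg Prod.snd ((Finsupp.single_left_inj one_ne_zero).mp hh)).symm)] at h2
      simp at h2
    · -- membership
      intro x
      rw [hl, List.mem_map]
      constructor
      · rintro ⟨p, hpL, rfl⟩
        exact ⟨p.1, p.2, (hLmem p).mp hpL, rfl⟩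
      · rintro ⟨i, j, hj, rfl⟩
        exact ⟨(i, j), (hLmem _).mpr hj, rfl⟩
    · -- regularity
      set rs := l.map (Ideal.Quotient.mk I) with hrs
      refine ⟨⟨fun i hi => ?_⟩, ?_⟩
      · -- weakly regular at index i
        have hiL : i < L.length := by
          rw [hrs, List.length_map, hl, List.length_map] at hi
          exact hi
        set Qi : Finset (Fin (n + 1) × Fin α) := (L.take i).toFinset with hQi
        have hQimem : ∀ p ∈ Qi, p.2 ≠ c := by
          intro p hp
          rw [hQi, List.mem_toFinset] at hp
          exact (hLmem p).mp (List.take_subset i L hp)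
        have hai : L[i].2 ≠ c := (hLmem _).mp (List.getElem_mem hiL)
        have hanotin : L[i] ∉ Qi := by
          rw [hQi, List.mem_toFinset]
          intro hmem
          have hdrop : L[i] ∈ L.drop i := by
            rw [List.drop_eq_getElem_cons hiL]
            exact List.mem_cons_self
          exact (List.disjoint_take_drop hLnd le_rfl) hmem hdrop
        have h0 : rs = L.map (fun p => Ideal.Quotient.mk I (D p)) := by
          rw [hrs, hl, List.map_map]
          rfl
        have hgetl : rs[i] = Ideal.Quotient.mk I (D L[i]) := by
          rw [List.getElem_of_eq h0 hi, List.getElem_map]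
        have hofl : Ideal.ofList (rs.take i)
            = Ideal.map (Ideal.Quotient.mk I) (Ideal.span (D '' ↑Qi)) := by
          have h1 : rs.take i = (l.take i).map (Ideal.Quotient.mk I) := by
            rw [hrs, List.map_take]
          have h2 : Ideal.span (D '' ↑Qi) = Ideal.ofList (l.take i) := by
            have hset : (D '' ↑Qi : Set (MvPolynomial (Fin (n + 1) × Fin α) k))
                = {x | x ∈ l.take i} := by
              ext x
              simp only [hQi, List.coe_toFinset, Set.mem_image, Set.mem_setOf_eq, hl,
                ← List.map_take, List.mem_map]
            rw [hset]
          rw [h1, h2, Ideal.map_ofList]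
        rw [hgetl, hofl]
        refine smulreg_helper I (Ideal.span (D '' ↑Qi)) (D L[i]) ?_
        intro f hf
        exact colon_step hα Qi hQimem L[i] hai hanotin hf
      · -- quotient nonzero
        intro htop
        have h1 : Ideal.ofList rs • (⊤ : Submodule (MvPolynomial (Fin (n + 1) × Fin α) k ⧸ I)
            (MvPolynomial (Fin (n + 1) × Fin α) k ⧸ I)) = Ideal.ofList rs := by
          rw [smul_eq_mul, Ideal.mul_top]
        rw [h1] at htop
        have h2 : Ideal.ofList rs = Ideal.map (Ideal.Quotient.mk I) (Ideal.ofList l) := by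
          rw [hrs, Ideal.map_ofList]
        have hlle : Ideal.ofList l ≤ Ideal.span (blockDifferences k n α hα) := by
          apply Ideal.span_le.mpr
          intro x hx
          obtain ⟨p, hp, rfl⟩ := List.mem_map.mp hx
          exact Ideal.subset_span ⟨p.1, p.2, (hLmem p).mp hp, rfl⟩
        have hne := hyperline_sup_ne_top hα (Ideal.ofList l) hlle
        apply hne
        rw [Ideal.eq_top_iff_one]
        have h1mem : (1 : MvPolynomial (Fin (n + 1) × Fin α) k ⧸ I)
            ∈ Ideal.map (Ideal.Quotient.mk I) (Ideal.ofList l) := by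
          rw [← h2, ← htop]
          exact Submodule.mem_top
        obtain ⟨y, hy, hy1⟩ := (Ideal.mem_map_iff_of_surjective _
          Ideal.Quotient.mk_surjective).mp h1mem
        have : y - 1 ∈ I := by
          rw [← Ideal.Quotient.eq]
          rw [hy1]
          exact (map_one (Ideal.Quotient.mk I)).symm ▸ rfl
        have : (1 : MvPolynomial (Fin (n + 1) × Fin α) k) = y - (y - 1) := by ring
        rw [this]
        exact sub_mem (Ideal.mem_sup_right hy) (Ideal.mem_sup_left ‹y - 1 ∈ I›)
  · -- isomorphism part
    set JD : Ideal (MvPolynomial (Fin (n + 1) × Fin α) k) :=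
      Ideal.span (blockDifferences k n α hα) with hJD
    set Tgt : Ideal (MvPolynomial (Fin (n + 1)) k) :=
      Ideal.span (Set.range fun i : Fin n =>
        (X i.castSucc ^ α * X i.succ ^ α : MvPolynomial (Fin (n + 1)) k)) with hTgt
    set φ : MvPolynomial (Fin (n + 1) × Fin α) k →ₐ[k] MvPolynomial (Fin (n + 1)) k :=
      rename Prod.fst with hφ
    set ψ : MvPolynomial (Fin (n + 1)) k →ₐ[k] MvPolynomial (Fin (n + 1) × Fin α) k :=
      rename (fun i => (i, c)) with hψ
    have hDmem : ∀ p : Fin (n + 1) × Fin α, X (p.1, c) - X p ∈ JD := by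
      intro p
      by_cases hp : p.2 = c
      · have : (p.1, c) = p := Prod.ext rfl hp.symm
        rw [this, sub_self]
        exact JD.zero_mem
      · have h1 : X p - X (p.1, c) ∈ JD := Ideal.subset_span ⟨p.1, p.2, hp, rfl⟩
        have := JD.neg_mem h1
        simpa using this
    have hφprod : ∀ blk : Fin (n + 1),
        φ (∏ j : Fin α, X (blk, j)) = X blk ^ α := by
      intro blk
      rw [hφ, map_prod]
      simp only [rename_X]
      rw [Finset.prod_const, Finset.card_univ, Fintype.card_fin]
    have hψpow : ∀ blk : Fin (n + 1),
        ψ ((X blk : MvPolynomial (Fin (n + 1)) k) ^ α) = X (blk, c) ^ α := by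
      intro blk
      rw [map_pow, hψ, rename_X]
    have hWprod : ∀ blk : Fin (n + 1),
        (X (blk, c) : MvPolynomial (Fin (n + 1) × Fin α) k) ^ α
          = rename (fun p : Fin (n + 1) × Fin α => (p.1, c)) (∏ j : Fin α, X (blk, j)) := by
      intro blk
      rw [map_prod]
      simp only [rename_X]
      rw [Finset.prod_const, Finset.card_univ, Fintype.card_fin]
    have hF0 : ∀ x ∈ I ⊔ JD, ((Ideal.Quotient.mkₐ k Tgt).comp φ) x = 0 := by
      have hle : I ⊔ JD ≤ RingHom.ker ((Ideal.Quotient.mkₐ k Tgt).comp φ).toRingHom := by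
        apply sup_le
        · rw [hI, hyperlineIdeal, Ideal.span_le]
          rintro y ⟨i, rfl⟩
          rw [SetLike.mem_coe, RingHom.mem_ker]
          show Ideal.Quotient.mkₐ k Tgt (φ _) = 0
          rw [map_mul, hφprod, hφprod, Ideal.Quotient.mkₐ_eq_mk,
            Ideal.Quotient.eq_zero_iff_mem]
          exact Ideal.subset_span ⟨i, rfl⟩
        · rw [hJD, Ideal.span_le]
          rintro y ⟨i, j, hj, rfl⟩
          rw [SetLike.mem_coe, RingHom.mem_ker]
          show Ideal.Quotient.mkₐ k Tgt (φ _) = 0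
          rw [map_sub, hφ]
          simp only [rename_X]
          rw [sub_self, map_zero]
      intro x hx
      exact hle hx
    have hG0 : ∀ x ∈ Tgt, ((Ideal.Quotient.mkₐ k (I ⊔ JD)).comp ψ) x = 0 := by
      have hle : Tgt ≤ RingHom.ker ((Ideal.Quotient.mkₐ k (I ⊔ JD)).comp ψ).toRingHom := by
        rw [hTgt, Ideal.span_le]
        rintro y ⟨i, rfl⟩
        rw [SetLike.mem_coe, RingHom.mem_ker]
        show Ideal.Quotient.mkₐ k (I ⊔ JD) (ψ _) = 0
        rw [map_mul, hψpow, hψpow, hWprod, hWprod,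
          Ideal.Quotient.mkₐ_eq_mk, Ideal.Quotient.eq_zero_iff_mem]
        rw [← map_mul]
        set gi : MvPolynomial (Fin (n + 1) × Fin α) k :=
          (∏ j : Fin α, X (i.castSucc, j)) * ∏ j : Fin α, X (i.succ, j) with hgi
        have h1 : gi ∈ I := by
          rw [hI, hyperlineIdeal]
          exact Ideal.subset_span ⟨i, rfl⟩
        have h2 : rename (fun p : Fin (n + 1) × Fin α => (p.1, c)) gi - gi ∈ JD := by
          apply rename_sub_mem
          intro p
          exact hDmem p
        have h3 := add_mem (Ideal.mem_sup_left h1) (Ideal.mem_sup_right h2)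
        simpa using h3
      intro x hx
      exact hle hx
    set F := Ideal.Quotient.liftₐ (I ⊔ JD) ((Ideal.Quotient.mkₐ k Tgt).comp φ) hF0 with hF
    set G := Ideal.Quotient.liftₐ Tgt ((Ideal.Quotient.mkₐ k (I ⊔ JD)).comp ψ) hG0 with hG
    refine ⟨AlgEquiv.ofAlgHom F G ?_ ?_⟩
    · apply Ideal.Quotient.algHom_ext
      apply MvPolynomial.algHom_ext
      intro i
      simp only [AlgHom.comp_apply, AlgHom.id_apply, Ideal.Quotient.mkₐ_eq_mk, hF, hG,
        Ideal.Quotient.liftₐ_apply, Ideal.Quotient.lift_mk,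
        AlgHom.toRingHom_eq_coe, AlgHom.coe_toRingHom, AlgHom.coe_comp, Function.comp_apply,
        RingHom.coe_coe]
      simp only [hψ, hφ, rename_X, Ideal.Quotient.mkₐ_eq_mk, Ideal.Quotient.liftₐ_apply,
        Ideal.Quotient.lift_mk, RingHom.coe_coe, AlgHom.coe_comp, Function.comp_apply]
    · apply Ideal.Quotient.algHom_ext
      apply MvPolynomial.algHom_ext
      intro p
      simp only [AlgHom.comp_apply, AlgHom.id_apply, Ideal.Quotient.mkₐ_eq_mk, hF, hG,
        Ideal.Quotient.liftₐ_apply, Ideal.Quotient.lift_mk,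
        AlgHom.toRingHom_eq_coe, AlgHom.coe_toRingHom, AlgHom.coe_comp, Function.comp_apply,
        RingHom.coe_coe]
      simp only [hψ, hφ, rename_X, Ideal.Quotient.mkₐ_eq_mk, Ideal.Quotient.liftₐ_apply,
        Ideal.Quotient.lift_mk, RingHom.coe_coe, AlgHom.coe_comp, Function.comp_apply]
      rw [Ideal.Quotient.eq]
      exact Ideal.mem_sup_right (hDmem p)
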